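/- Let T be a compact operator on a Banach space M over a complete nonarchimedean field E, and λ ∈ E nonzero. Then the generalized λ-eigenspace of T, i.e. the union over m of ker((T − λ)^m), is finite-dimensional. -/

import Mathlib

open Metric Set

section RieszTheory

variable {E M : Type*} [NontriviallyNormedField E] [CompleteSpace E]
    [NormedAddCommGroup M] [NormedSpace E M] [CompleteSpace M]

private lemma aux_coe_pow (T : M →L[E] M) (lam : E) (m : ℕ) :
    (((T - lam • (1 : M →L[E] M)) ^ m : M →L[E] M) : M →ₗ[E] M)
      = ((T : M →ₗ[E] M) - lam • LinearMap.id) ^ m := by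
  have h : (((T - lam • (1 : M →L[E] M)) : M →L[E] M) : M →ₗ[E] M)
      = (T : M →ₗ[E] M) - lam • LinearMap.id := by ext x; simp
  rw [← h]
  exact map_pow (ContinuousLinearMap.toLinearMapRingHom (R₁ := E) (M₁ := M)) _ m

private lemma aux_ker_eq (T : M →L[E] M) (lam : E) (m : ℕ) :
    LinearMap.ker (((T : M →ₗ[E] M) - lam • LinearMap.id) ^ m)
      = LinearMap.ker (((T - lam • (1 : M →L[E] M)) ^ m : M →L[E] M) : M →ₗ[E] M) := by
  rw [← aux_coe_pow]

private lemma aux_decomp (T : M →L[E] M) (hT : IsCompactOperator ⇑T) (lam : E) (m : ℕ) :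
    ∃ S : M →L[E] M, IsCompactOperator ⇑S ∧
      (T - lam • (1 : M →L[E] M)) ^ m = S + ((-lam) ^ m) • 1 := by
  induction m with
  | zero => exact ⟨0, isCompactOperator_zero, by simp⟩
  | succ m ih =>
    obtain ⟨S, hS, hm⟩ := ih
    refine ⟨S * (T - lam • 1) + ((-lam) ^ m) • T, ?_, ?_⟩
    · have h1 : IsCompactOperator ⇑(S * (T - lam • 1)) := hS.comp_clm (T - lam • 1)
      have h2 : IsCompactOperator ⇑(((-lam) ^ m) • T) := hT.smul ((-lam) ^ m)
      exact h1.add h2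
    · rw [pow_succ, hm, add_mul, smul_mul_assoc, one_mul, mul_sub, mul_smul_comm, mul_one,
        smul_sub, smul_smul, pow_succ]
      module

private lemma aux_ker_fd (T : M →L[E] M) (hT : IsCompactOperator ⇑T) (lam : E)
    (hlam : lam ≠ 0) (m : ℕ) :
    FiniteDimensional E
      ↥(LinearMap.ker (((T : M →ₗ[E] M) - lam • LinearMap.id) ^ m)) := by
  obtain ⟨S, hS, hSm⟩ := aux_decomp T hT lam m
  rw [aux_ker_eq]
  set G : M →L[E] M := T - lam • 1 with hG
  set N := LinearMap.ker ((G ^ m : M →L[E] M) : M →ₗ[E] M) with hN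
  have hc : (-lam) ^ m ≠ 0 := pow_ne_zero _ (neg_ne_zero.mpr hlam)
  set R : M →L[E] M := (-((-lam) ^ m)⁻¹) • S with hRdef
  have hRc : IsCompactOperator ⇑R := hS.smul _
  have hfix : ∀ x ∈ N, R x = x := by
    intro x hx
    have h0 : (G ^ m) x = 0 := hx
    rw [hSm] at h0
    simp only [ContinuousLinearMap.add_apply, ContinuousLinearMap.smul_apply,
      ContinuousLinearMap.one_apply] at h0
    have hSx : S x = -(((-lam) ^ m) • x) := eq_neg_of_add_eq_zero_left h0
    have hRx : R x = -(((-lam) ^ m)⁻¹ • S x) := by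
      rw [hRdef]; simp
    rw [hRx, hSx, smul_neg, neg_neg, smul_smul, inv_mul_cancel₀ hc, one_smul]
  obtain ⟨K', hK'c, hK's⟩ := hRc.image_closedBall_subset_compact 1
  have hNc : IsClosed (N : Set M) := ContinuousLinearMap.isClosed_ker _
  have hA : IsCompact (closedBall (0 : ↥N) 1) := by
    rw [Subtype.isCompact_iff]
    have himg : Subtype.val '' closedBall (0 : ↥N) 1 = closedBall (0 : M) 1 ∩ ↑N := by
      ext x
      constructor
      · rintro ⟨⟨y, hy⟩, hball, rfl⟩
        refine ⟨?_, hy⟩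
        simpa [mem_closedBall, dist_zero_right] using hball
      · rintro ⟨hball, hx⟩
        refine ⟨⟨x, hx⟩, ?_, rfl⟩
        simpa [mem_closedBall, dist_zero_right] using hball
    rw [himg]
    refine IsCompact.of_isClosed_subset hK'c (IsClosed.inter Metric.isClosed_closedBall hNc) ?_
    rintro x ⟨hball, hx⟩
    rw [← hfix x hx]
    exact hK's ⟨x, hball, rfl⟩
  exact FiniteDimensional.of_isCompact_closedBall₀ E one_pos hA

private lemma aux_mono (f : M →ₗ[E] M) : Monotone fun m => LinearMap.ker (f ^ m) := by
  apply monotone_nat_of_le_succ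
  intro m x hx
  rw [LinearMap.mem_ker] at hx ⊢
  rw [pow_succ', Module.End.mul_apply, hx, map_zero]

private lemma aux_stab (T : M →L[E] M) (hT : IsCompactOperator ⇑T) (lam : E)
    (hlam : lam ≠ 0) :
    ∃ k : ℕ, LinearMap.ker (((T : M →ₗ[E] M) - lam • LinearMap.id) ^ k)
      = LinearMap.ker (((T : M →ₗ[E] M) - lam • LinearMap.id) ^ (k + 1)) := by
  by_contra hcon
  push_neg at hcon
  set f : M →ₗ[E] M := (T : M →ₗ[E] M) - lam • LinearMap.id with hf
  set G : M →L[E] M := T - lam • 1 with hG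
  set K : ℕ → Submodule E M := fun m => LinearMap.ker (f ^ m) with hK
  have hKG : ∀ m, K m = LinearMap.ker ((G ^ m : M →L[E] M) : M →ₗ[E] M) := fun m => aux_ker_eq T lam m
  have hKmono : Monotone K := aux_mono f
  have hclosed : ∀ m, IsClosed ((K m : Set M)) := by
    intro m; rw [hKG]; exact ContinuousLinearMap.isClosed_ker _
  obtain ⟨c, hc⟩ : ∃ c : E, 1 < ‖c‖ := NormedField.exists_one_lt_norm E
  set R : ℝ := ‖c‖ + 1 with hR
  have hcR : ‖c‖ < R := by rw [hR]; linarith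
  -- Riesz lemma construction
  have key : ∀ k : ℕ, ∃ x : M, x ∈ K (k + 1) ∧ ‖x‖ ≤ R ∧ ∀ y ∈ K k, 1 ≤ ‖x - y‖ := by
    intro k
    obtain ⟨x0, hx0mem, hx0not⟩ :=
      SetLike.exists_of_lt (lt_of_le_of_ne (hKmono (Nat.le_succ k)) (hcon k))
    set F : Submodule E ↥(K (k + 1)) := (K k).comap (K (k + 1)).subtype with hF
    have hFc : IsClosed (F : Set ↥(K (k + 1))) :=
      (hclosed k).preimage continuous_subtype_val
    have hFne : ∃ x : ↥(K (k + 1)), x ∉ F := by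
      refine ⟨⟨x0, hx0mem⟩, ?_⟩
      simp only [hF, Submodule.mem_comap, Submodule.coe_subtype]
      exact hx0not
    obtain ⟨x₀, hx₀R, hx₀sep⟩ := riesz_lemma_of_norm_lt hc hcR hFc hFne
    refine ⟨(x₀ : M), x₀.2, hx₀R, ?_⟩
    intro y hy
    have hyF : (⟨y, hKmono (Nat.le_succ k) hy⟩ : ↥(K (k + 1))) ∈ F := by
      simp only [hF, Submodule.mem_comap, Submodule.coe_subtype]
      exact hy
    have := hx₀sep _ hyF
    simpa using this
  choose u hu1 hu2 hu3 using key
  -- commutation and invariance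
  have hcomm : ∀ n : ℕ, T.comp (G ^ n) = (G ^ n).comp T := by
    intro n
    have h1 : Commute T G := by
      show T * G = G * T
      rw [hG, mul_sub, sub_mul, mul_smul_comm, smul_mul_assoc, mul_one, one_mul]
    have h2 : Commute T (G ^ n) := h1.pow_right n
    calc T.comp (G ^ n) = T * G ^ n := rfl
    _ = G ^ n * T := h2
    _ = (G ^ n).comp T := rfl
  have hTinv : ∀ n : ℕ, ∀ x ∈ K n, T x ∈ K n := by
    intro n x hx
    rw [hKG] at hx ⊢
    rw [LinearMap.mem_ker] at hx ⊢
    have : ((G ^ n).comp T) x = 0 := by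
      rw [← hcomm n]
      simp only [ContinuousLinearMap.comp_apply]
      rw [show ((G ^ n) x : M) = 0 from hx, map_zero]
    exact this
  have hGinv : ∀ n : ℕ, G (u n) ∈ K n := by
    intro n
    rw [hKG, LinearMap.mem_ker]
    have : (G ^ (n + 1)) (u n) = 0 := by
      have := hu1 n
      rw [hKG, LinearMap.mem_ker] at this
      exact this
    calc ((G ^ n) (G (u n)) : M) = ((G ^ n) * G) (u n) := rfl
    _ = (G ^ (n + 1)) (u n) := by rw [← pow_succ]
    _ = 0 := this
  -- separation of images
  have hsep : ∀ m n : ℕ, m < n → ‖lam‖ ≤ ‖T (u n) - T (u m)‖ := by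
    intro m n hmn
    set v : M := T (u m) - G (u n) with hv
    have hvK : v ∈ K n := by
      refine Submodule.sub_mem _ ?_ (hGinv n)
      exact hKmono hmn (hTinv (m + 1) _ (hu1 m))
    have heq : T (u n) - T (u m) = lam • (u n - lam⁻¹ • v) := by
      rw [smul_sub, smul_smul, mul_inv_cancel₀ hlam, one_smul, hv, hG]
      simp only [ContinuousLinearMap.sub_apply, ContinuousLinearMap.smul_apply,
        ContinuousLinearMap.one_apply]
      abel
    rw [heq, norm_smul]
    have h1 : 1 ≤ ‖u n - lam⁻¹ • v‖ := hu3 n _ (Submodule.smul_mem _ _ hvK)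
    calc ‖lam‖ = ‖lam‖ * 1 := (mul_one _).symm
    _ ≤ ‖lam‖ * ‖u n - lam⁻¹ • v‖ := by
        apply mul_le_mul_of_nonneg_left h1 (norm_nonneg _)
  -- compactness contradiction
  obtain ⟨K', hK'c, hK's⟩ := hT.image_closedBall_subset_compact R
  have hmem : ∀ n, T (u n) ∈ K' := by
    intro n
    refine hK's ⟨u n, ?_, rfl⟩
    simpa [mem_closedBall, dist_zero_right] using hu2 n
  obtain ⟨x, -, φ, hφ, hconv⟩ := hK'c.tendsto_subseq hmem
  have hcauchy : CauchySeq ((fun n => T (u n)) ∘ φ) := hconv.cauchySeq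
  obtain ⟨N, hN⟩ := Metric.cauchySeq_iff'.1 hcauchy ‖lam‖ (norm_pos_iff.mpr hlam)
  have h1 := hN (N + 1) (Nat.le_succ N)
  have h2 := hsep (φ N) (φ (N + 1)) (hφ (Nat.lt_succ_self N))
  rw [Function.comp_apply, Function.comp_apply, dist_eq_norm] at h1
  linarith

end RieszTheory

/-- The generalized `λ`-eigenspace (`λ ≠ 0`) of a compact operator on a Banach space
over a complete nonarchimedean field is finite-dimensional. -/
theorem compact_operator_generalized_eigenspace_finiteDimensional
    {E M : Type*} [NontriviallyNormedField E] [CompleteSpace E] [IsUltrametricDist E]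
    [NormedAddCommGroup M] [NormedSpace E M] [CompleteSpace M]
    (T : M →L[E] M) (hT : IsCompactOperator ⇑T) (lam : E) (hlam : lam ≠ 0) :
    FiniteDimensional E
      ↥(⨆ m : ℕ, LinearMap.ker (((T : M →ₗ[E] M) - lam • LinearMap.id) ^ m)) := by
  obtain ⟨k, hk⟩ := aux_stab T hT lam hlam
  set f : M →ₗ[E] M := (T : M →ₗ[E] M) - lam • LinearMap.id with hf
  have hstab := Module.End.ker_pow_constant hk
  have hsup : (⨆ m : ℕ, LinearMap.ker (f ^ m)) = LinearMap.ker (f ^ k) := by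
    apply le_antisymm
    · apply iSup_le
      intro m
      rcases le_total m k with h | h
      · exact aux_mono f h
      · have := hstab (m - k)
        rw [Nat.add_sub_cancel' h] at this
        exact this.ge
    · exact le_iSup (fun m => LinearMap.ker (f ^ m)) k
  rw [hsup]
  exact aux_ker_fd T hT lam hlam k
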